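/- Let T > 0, α ∈ (0,1), a ∈ ℝ, t ∈ (0,T], and let x : [0,T] → ℝ be continuous. Define S := sup{u ∈ [0,t] : x_u = a} if this set is nonempty and S := 0 otherwise. Then: (i) if a < x_t then S < t; and (ii) ∫₀^t 1_{\{x_s < a < x_t\}} (t−s)^{−1−α} ds ≤ 1_{\{a < x_t\}} · ((t−S)^{−α} − t^{−α}) / α. -/

import Mathlib

open MeasureTheory Set
open scoped ENNReal

noncomputable section

/-- last hitting time estimate. With `S` the last time in `[0,t]` at which the
continuous path `x` equals `a` (and `S = 0` if there is no such time; note `sSup ∅ = 0` in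
`ℝ`): (i) if `a < x t` then `S < t`, and (ii)
`∫₀^t 1_{x_s < a < x_t} (t-s)^{-1-α} ds ≤ 1_{a < x_t} ((t-S)^{-α} - t^{-α})/α`. -/
theorem last_hitting_time_estimate
    (T α a t : ℝ) (hT : 0 < T) (hα : α ∈ Set.Ioo (0:ℝ) 1) (ht : t ∈ Set.Ioc (0:ℝ) T)
    (x : ℝ → ℝ) (hx : ContinuousOn x (Set.Icc 0 T))
    (S : ℝ) (hS : S = sSup {u | u ∈ Set.Icc (0:ℝ) t ∧ x u = a}) :
    (a < x t → S < t) ∧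
    (∫⁻ s in Set.Ioo (0:ℝ) t,
        (if x s < a ∧ a < x t then ENNReal.ofReal ((t - s) ^ (-(1 + α))) else 0))
      ≤ (if a < x t then ENNReal.ofReal (((t - S) ^ (-α) - t ^ (-α)) / α) else 0) := by
  obtain ⟨hα0, hα1⟩ := hα
  obtain ⟨ht0, htT⟩ := ht
  set A : Set ℝ := {u | u ∈ Set.Icc (0:ℝ) t ∧ x u = a} with hA
  have hbdd : BddAbove A := ⟨t, fun u hu => hu.1.2⟩
  have hS0 : 0 ≤ S := by
    rcases Set.eq_empty_or_nonempty A with h | h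
    · rw [hS, h, Real.sSup_empty]
    · obtain ⟨u, hu⟩ := h
      calc (0:ℝ) ≤ u := hu.1.1
        _ ≤ S := hS ▸ le_csSup hbdd hu
  have hSt : S ≤ t := by
    rcases Set.eq_empty_or_nonempty A with h | h
    · rw [hS, h, Real.sSup_empty]; exact ht0.le
    · rw [hS]; exact csSup_le h fun u hu => hu.1.2
  have key : ∀ s ∈ Set.Ioo (0:ℝ) t, x s < a → a < x t → s ≤ S := by
    intro s hs hxs hxt
    have hsub : Set.Icc s t ⊆ Set.Icc 0 T := Set.Icc_subset_Icc hs.1.le htT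
    obtain ⟨u, hu, hxu⟩ :=
      intermediate_value_Icc hs.2.le (hx.mono hsub) ⟨hxs.le, hxt.le⟩
    have huA : u ∈ A := ⟨⟨le_trans hs.1.le hu.1, hu.2⟩, hxu⟩
    calc s ≤ u := hu.1
      _ ≤ S := hS ▸ le_csSup hbdd huA
  have hSlt : a < x t → S < t := by
    intro hxt
    rcases Set.eq_empty_or_nonempty A with h | h
    · rw [hS, h, Real.sSup_empty]; exact ht0
    · have hclosed : IsClosed A := by
        have : A = Set.Icc 0 t ∩ x ⁻¹' {a} := by
          rfl
        rw [this]
        exact ContinuousOn.preimage_isClosed_of_isClosed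
          (hx.mono (Set.Icc_subset_Icc le_rfl htT)) isClosed_Icc isClosed_singleton
      have hmem : sSup A ∈ A := hclosed.csSup_mem h hbdd
      have hSA : S ∈ A := hS ▸ hmem
      refine lt_of_le_of_ne hSt ?_
      intro hEq
      rw [hEq] at hSA
      rw [hSA.2] at hxt
      exact lt_irrefl a hxt
  refine ⟨hSlt, ?_⟩
  by_cases hxt : a < x t
  · have hStlt := hSlt hxt
    rw [if_pos hxt]
    calc (∫⁻ s in Set.Ioo (0:ℝ) t,
            (if x s < a ∧ a < x t then ENNReal.ofReal ((t - s) ^ (-(1 + α))) else 0))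
        ≤ ∫⁻ s in Set.Ioo (0:ℝ) t,
            (Set.Ioc 0 S).indicator (fun s => ENNReal.ofReal ((t - s) ^ (-(1 + α)))) s := by
          apply setLIntegral_mono' measurableSet_Ioo
          intro s hs
          by_cases hc : x s < a ∧ a < x t
          · rw [if_pos hc, Set.indicator_of_mem (Set.mem_Ioc.mpr ⟨hs.1, key s hs hc.1 hc.2⟩) _]
          · rw [if_neg hc]; exact zero_le
      _ = ∫⁻ s in Set.Ioc 0 S ∩ Set.Ioo (0:ℝ) t,
            ENNReal.ofReal ((t - s) ^ (-(1 + α))) := by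
          rw [lintegral_indicator measurableSet_Ioc,
            Measure.restrict_restrict measurableSet_Ioc]
      _ ≤ ∫⁻ s in Set.Ioc 0 S, ENNReal.ofReal ((t - s) ^ (-(1 + α))) :=
          lintegral_mono_set Set.inter_subset_left
      _ = ENNReal.ofReal (((t - S) ^ (-α) - t ^ (-α)) / α) := by
          have hcont : ContinuousOn (fun s => (t - s) ^ (-(1 + α))) (Set.Icc 0 S) := by
            apply ContinuousOn.rpow_const
            · exact (continuous_const.sub continuous_id).continuousOn
            · intro s hsm
              left
              have : s < t := lt_of_le_of_lt hsm.2 hStlt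
              exact sub_ne_zero_of_ne this.ne'
          have hint : IntegrableOn (fun s => (t - s) ^ (-(1 + α))) (Set.Ioc 0 S) :=
            hcont.integrableOn_Icc.mono_set Set.Ioc_subset_Icc_self
          have hnn : (0 : ℝ → ℝ) ≤ᵐ[volume.restrict (Set.Ioc 0 S)]
              fun s => (t - s) ^ (-(1 + α)) := by
            refine ae_restrict_of_forall_mem measurableSet_Ioc fun s hs => ?_
            exact Real.rpow_nonneg (by linarith [hs.2, hStlt]) _
          rw [← ofReal_integral_eq_lintegral_ofReal hint hnn,
            ← intervalIntegral.integral_of_le hS0]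
          congr 1
          have h1 : ∫ s in (0:ℝ)..S, (t - s) ^ (-(1 + α))
              = ∫ u in (t - S)..(t - 0), u ^ (-(1 + α)) :=
            intervalIntegral.integral_comp_sub_left (fun u => u ^ (-(1 + α))) t
          rw [h1, sub_zero]
          rw [integral_rpow (Or.inr ⟨by intro h; linarith [neg_eq_iff_eq_neg.mp h],
            Set.notMem_uIcc_of_lt (by linarith) ht0⟩)]
          have hexp : -(1 + α) + 1 = -α := by ring
          rw [hexp]
          rw [div_neg, ← neg_div, neg_sub]
  · simp only [hxt, and_false, if_false, lintegral_const, zero_mul, le_refl]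

end
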